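/- arXiv:2506.19661 — 3 statements merged into one kernel-verified Lean document; each statement's English description precedes it below -/
import Mathlib

section
/- Let (V₁, E₁) and (V₂, E₂) be hypergraphs and let ψ be a type-preserving graph isomorphism from the incidence lowering of (V₁, E₁) to the incidence lowering of (V₂, E₂). Then the induced bijection φ : V₁ ≃ V₂ obtained by restricting ψ to Sum.inl-vertices is a hypergraph isomorphism: for every S : Set V₁, S ∈ E₁ ↔ φ '' S ∈ E₂; moreover, for every e ∈ E₁, if ψ (Sum.inr e) = Sum.inr e' then e' = φ '' e. -/
/-- The incidence lowering of a hypergraph `(V, E)`: the simple graph on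
`V ⊕ {e // e ∈ E}` in which `Sum.inl v` is adjacent to `Sum.inr e` iff `v ∈ e`,
with no other adjacencies. -/
def incidenceLowering {V : Type*} (E : Set (Set V)) :
    SimpleGraph (V ⊕ {e // e ∈ E}) where
  Adj x y :=
    (∃ (v : V) (e : {e // e ∈ E}), x = Sum.inl v ∧ y = Sum.inr e ∧ v ∈ e.1) ∨
    (∃ (v : V) (e : {e // e ∈ E}), x = Sum.inr e ∧ y = Sum.inl v ∧ v ∈ e.1)
  symm := by
    refine ⟨?_⟩
    rintro x y (⟨v, e, rfl, rfl, h⟩ | ⟨v, e, rfl, rfl, h⟩)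
    · exact Or.inr ⟨v, e, rfl, rfl, h⟩
    · exact Or.inl ⟨v, e, rfl, rfl, h⟩
  loopless := by
    refine ⟨?_⟩
    rintro x (⟨v, e, rfl, h, -⟩ | ⟨v, e, rfl, h, -⟩) <;> simp at h

lemma incidenceLowering_adj {V : Type*} (E : Set (Set V)) (v : V) (e : {e // e ∈ E}) :
    (incidenceLowering E).Adj (Sum.inl v) (Sum.inr e) ↔ v ∈ e.1 := by
  constructor
  · rintro (⟨v', e', hv, he, h⟩ | ⟨v', e', hv, he, h⟩)
    · cases hv; cases he; exact h
    · exact absurd hv (by simp)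
  · intro h; exact Or.inl ⟨v, e, rfl, rfl, h⟩

/-- A type-preserving graph isomorphism `ψ` of incidence
lowerings restricts on node-vertices to a hypergraph isomorphism `φ`;
moreover `ψ` maps the hyperedge-vertex `e` to the hyperedge-vertex `φ '' e`. -/
theorem lowering_iso_lifts {V₁ V₂ : Type*}
    (E₁ : Set (Set V₁)) (E₂ : Set (Set V₂))
    (ψ : incidenceLowering E₁ ≃g incidenceLowering E₂)
    (hnode : ∀ v : V₁, ∃ w : V₂, ψ (Sum.inl v) = Sum.inl w)
    (hedge : ∀ e : {e // e ∈ E₁}, ∃ e' : {e // e ∈ E₂}, ψ (Sum.inr e) = Sum.inr e') :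
    ∃ φ : V₁ ≃ V₂,
      (∀ v : V₁, ψ (Sum.inl v) = Sum.inl (φ v)) ∧
      (∀ S : Set V₁, S ∈ E₁ ↔ φ '' S ∈ E₂) ∧
      (∀ (e : {e // e ∈ E₁}) (e' : {e // e ∈ E₂}),
        ψ (Sum.inr e) = Sum.inr e' → e'.1 = φ '' e.1) := by
  classical
  set f : V₁ → V₂ := fun v => (hnode v).choose with hfdef
  have hf : ∀ v, ψ (Sum.inl v) = Sum.inl (f v) := fun v => (hnode v).choose_spec
  -- inverse direction facts
  have hnode' : ∀ w : V₂, ∃ v : V₁, ψ.symm (Sum.inl w) = Sum.inl v := by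
    intro w
    cases h : ψ.symm (Sum.inl w) with
    | inl v => exact ⟨v, rfl⟩
    | inr e =>
      obtain ⟨e', he'⟩ := hedge e
      have := ψ.apply_symm_apply (Sum.inl w)
      rw [h, he'] at this
      simp at this
  have hedge' : ∀ e' : {e // e ∈ E₂}, ∃ e : {e // e ∈ E₁},
      ψ.symm (Sum.inr e') = Sum.inr e := by
    intro e'
    cases h : ψ.symm (Sum.inr e') with
    | inr e => exact ⟨e, rfl⟩
    | inl v =>
      obtain ⟨w, hw⟩ := hnode v
      have := ψ.apply_symm_apply (Sum.inr e')
      rw [h, hw] at this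
      simp at this
  set g : V₂ → V₁ := fun w => (hnode' w).choose with hgdef
  have hg : ∀ w, ψ.symm (Sum.inl w) = Sum.inl (g w) := fun w => (hnode' w).choose_spec
  have hgf : ∀ v, g (f v) = v := by
    intro v
    have := ψ.symm_apply_apply (Sum.inl v)
    rw [hf v, hg (f v)] at this
    exact Sum.inl.injEq .. ▸ this
  have hfg : ∀ w, f (g w) = w := by
    intro w
    have := ψ.apply_symm_apply (Sum.inl w)
    rw [hg w, hf (g w)] at this
    exact Sum.inl.injEq .. ▸ this
  set φ : V₁ ≃ V₂ := ⟨f, g, hgf, hfg⟩ with hφ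
  -- key membership transfer
  have key : ∀ (e : {e // e ∈ E₁}) (e' : {e // e ∈ E₂}),
      ψ (Sum.inr e) = Sum.inr e' → ∀ v : V₁, v ∈ e.1 ↔ f v ∈ e'.1 := by
    intro e e' he v
    have := ψ.map_adj_iff (v := Sum.inl v) (w := Sum.inr e)
    rw [hf v, he, incidenceLowering_adj, incidenceLowering_adj] at this
    exact this.symm
  have third : ∀ (e : {e // e ∈ E₁}) (e' : {e // e ∈ E₂}),
      ψ (Sum.inr e) = Sum.inr e' → e'.1 = φ '' e.1 := by
    intro e e' he
    ext w
    constructor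
    · intro hw
      refine ⟨g w, ?_, hfg w⟩
      have := (key e e' he (g w))
      rw [hfg w] at this
      exact this.mpr hw
    · rintro ⟨v, hv, rfl⟩
      exact (key e e' he v).mp hv
  refine ⟨φ, hf, ?_, third⟩
  intro S
  constructor
  · intro hS
    obtain ⟨e', he'⟩ := hedge ⟨S, hS⟩
    have := third ⟨S, hS⟩ e' he'
    rw [← this]; exact e'.2
  · intro hS
    obtain ⟨e, he⟩ := hedge' ⟨φ '' S, hS⟩
    have := third e ⟨φ '' S, hS⟩ (by rw [← he, ψ.apply_symm_apply])
    have heq : e.1 = S := by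
      have := congrArg (fun T => φ.symm '' T) this
      simpa [Set.image_image, hgf] using this.symm
    rw [← heq]; exact e.2
end

section
/- Two graphs with node-tuple collections (G₁, T₁) and (G₂, T₂) admit an isomorphism of graphs with node-tuple collections if and only if their lowerings admit a type-preserving isomorphism. That is, there exists a graph isomorphism φ : G₁ ≃g G₂ with (∀ t : List V₁, t ∈ T₁ ↔ t.map φ ∈ T₂) if and only if there exists a bijection ψ between the vertex types of the two lowerings that maps node-vertices to node-vertices, edge-vertices to edge-vertices, and tuple-vertices to tuple-vertices, and preserves in both directions the adjacency relation and the indexed membership relation. -/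
/-- Vertex type of the lowering of a graph with a node-tuple collection:
node-vertices, edge-vertices, and tuple-vertices. -/
abbrev NTVert {V : Type*} (G : SimpleGraph V) (T : Set (List V)) : Type _ :=
  V ⊕ {e // e ∈ G.edgeSet} ⊕ {t // t ∈ T}

/-- Adjacency relation of the lowering: a node-vertex `v` is related to an
edge-vertex `e` iff `v` is an endpoint of `e`. -/
def ntAdj {V : Type*} (G : SimpleGraph V) (T : Set (List V)) :
    NTVert G T → NTVert G T → Prop
  | Sum.inl v, Sum.inr (Sum.inl e) => v ∈ e.1
  | _, _ => False

/-- Indexed membership relation of the lowering: `ntMem _ _ x y i` holds iff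
`x` is a node-vertex `v`, `y` is a tuple-vertex `t`, and the `i`-th entry of
the list `t` is `v`. -/
def ntMem {V : Type*} (G : SimpleGraph V) (T : Set (List V)) :
    NTVert G T → NTVert G T → ℕ → Prop
  | Sum.inl v, Sum.inr (Sum.inr t), i => t.1[i]? = some v
  | _, _, _ => False

/-- Two graphs with node-tuple collections are isomorphic iff
their lowerings admit a type-preserving isomorphism. -/
theorem nodeTuple_iso_iff_lowering_iso {V₁ V₂ : Type*}
    (G₁ : SimpleGraph V₁) (G₂ : SimpleGraph V₂)
    (T₁ : Set (List V₁)) (T₂ : Set (List V₂))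
    (hT₁ : ∀ t ∈ T₁, 2 ≤ t.length) (hT₂ : ∀ t ∈ T₂, 2 ≤ t.length) :
    (∃ φ : G₁ ≃g G₂, ∀ t : List V₁, t ∈ T₁ ↔ t.map ⇑φ ∈ T₂) ↔
    (∃ ψ : NTVert G₁ T₁ ≃ NTVert G₂ T₂,
      (∀ v : V₁, ∃ w : V₂, ψ (Sum.inl v) = Sum.inl w) ∧
      (∀ e : {e // e ∈ G₁.edgeSet}, ∃ e' : {e // e ∈ G₂.edgeSet},
        ψ (Sum.inr (Sum.inl e)) = Sum.inr (Sum.inl e')) ∧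
      (∀ t : {t // t ∈ T₁}, ∃ t' : {t // t ∈ T₂},
        ψ (Sum.inr (Sum.inr t)) = Sum.inr (Sum.inr t')) ∧
      (∀ x y, ntAdj G₁ T₁ x y ↔ ntAdj G₂ T₂ (ψ x) (ψ y)) ∧
      (∀ x y i, ntMem G₁ T₁ x y i ↔ ntMem G₂ T₂ (ψ x) (ψ y) i)) := by
  constructor
  · rintro ⟨φ, hφ⟩
    refine ⟨Equiv.sumCongr φ.toEquiv (Equiv.sumCongr φ.mapEdgeSet
      ⟨fun t => ⟨t.1.map φ, (hφ t.1).mp t.2⟩,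
       fun t => ⟨t.1.map φ.symm, (hφ _).mpr (by
         have : (t.1.map ⇑φ.symm).map ⇑φ = t.1 := by
           rw [List.map_map]; simp [Function.comp_def]
         rw [this]; exact t.2)⟩,
       fun t => Subtype.ext (by dsimp only; rw [List.map_map]; simp [Function.comp_def]),
       fun t => Subtype.ext (by dsimp only; rw [List.map_map]; simp [Function.comp_def])⟩),
      fun v => ⟨φ v, rfl⟩, fun e => ⟨_, rfl⟩, fun t => ⟨_, rfl⟩, ?_, ?_⟩
    · rintro (v | e | t) (w | f | s) <;>
        simp only [Equiv.sumCongr_apply, Sum.map_inl, Sum.map_inr, ntAdj, iff_self]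
      show _ ↔ φ v ∈ Sym2.map ⇑φ f.1
      constructor
      · intro h
        exact Sym2.mem_map.2 ⟨v, h, rfl⟩
      · intro h
        obtain ⟨a, ha, hav⟩ := Sym2.mem_map.1 h
        exact φ.toEquiv.injective hav ▸ ha
    · rintro (v | e | t) (w | f | s) i <;>
        simp only [Equiv.sumCongr_apply, Sum.map_inl, Sum.map_inr, ntMem, iff_self]
      show _ ↔ (s.1.map φ)[i]? = some (φ v)
      rw [List.getElem?_map]
      constructor
      · intro h; rw [h]; rfl
      · intro h
        obtain ⟨a, ha, hav⟩ := Option.map_eq_some_iff.1 h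
        rw [ha, φ.toEquiv.injective hav]
  · rintro ⟨ψ, h1, h2, h3, h4, h5⟩
    -- the vertex map
    choose f hf using h1
    choose fe hfe using h2
    choose ft hft using h3
    -- surjectivity of the node part
    have hsurj : ∀ w : V₂, ∃ v : V₁, f v = w := by
      intro w
      rcases hx : ψ.symm (Sum.inl w) with v | e | t
      · refine ⟨v, ?_⟩
        have : ψ (Sum.inl v) = Sum.inl w := by rw [← hx, Equiv.apply_symm_apply]
        rw [hf v] at this
        exact Sum.inl.injEq _ _ ▸ this
      · have : ψ (Sum.inr (Sum.inl e)) = Sum.inl w := by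
          rw [← hx, Equiv.apply_symm_apply]
        rw [hfe e] at this; exact absurd this (by simp)
      · have : ψ (Sum.inr (Sum.inr t)) = Sum.inl w := by
          rw [← hx, Equiv.apply_symm_apply]
        rw [hft t] at this; exact absurd this (by simp)
    have hinj : Function.Injective f := by
      intro a b hab
      have : ψ (Sum.inl a) = ψ (Sum.inl b) := by rw [hf, hf, hab]
      simpa using ψ.injective this
    -- key lemma about membership
    have hmem : ∀ (v : V₁) (t : {t // t ∈ T₁}) (i : ℕ),
        t.1[i]? = some v ↔ (ft t).1[i]? = some (f v) := by
      intro v t i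
      have := h5 (Sum.inl v) (Sum.inr (Sum.inr t)) i
      rw [hf, hft] at this
      exact this
    -- image tuple is the mapped list
    have htuple : ∀ t : {t // t ∈ T₁}, (ft t).1 = t.1.map f := by
      intro t
      apply List.ext_getElem?
      intro i
      rw [List.getElem?_map]
      rcases ht : t.1[i]? with _ | v
      · simp only [Option.map_none]
        rcases hs : (ft t).1[i]? with _ | w
        · rfl
        · obtain ⟨v, rfl⟩ := hsurj w
          rw [← hmem v t i] at hs
          rw [ht] at hs; exact absurd hs (by simp)
      · have := (hmem v t i).1 ht
        rw [this, Option.map_some]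
    -- the graph isomorphism
    have hadj : ∀ a b : V₁, G₁.Adj a b ↔ G₂.Adj (f a) (f b) := by
      intro a b
      constructor
      · intro hab
        set e : {e // e ∈ G₁.edgeSet} := ⟨s(a, b), hab⟩ with he
        have h1' : ntAdj G₂ T₂ (ψ (Sum.inl a)) (ψ (Sum.inr (Sum.inl e))) :=
          (h4 _ _).1 (by simp [ntAdj, he])
        have h2' : ntAdj G₂ T₂ (ψ (Sum.inl b)) (ψ (Sum.inr (Sum.inl e))) :=
          (h4 _ _).1 (by simp [ntAdj, he])
        rw [hf, hfe] at h1' h2'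
        simp only [ntAdj] at h1' h2'
        have hne : f a ≠ f b := fun h => hab.ne (hinj h)
        have := (Sym2.mem_and_mem_iff hne).1 ⟨h1', h2'⟩
        have hmem2 := (fe e).2
        rw [this] at hmem2
        exact hmem2
      · intro hab
        -- surjectivity of the edge part
        set e' : {e // e ∈ G₂.edgeSet} := ⟨s(f a, f b), hab⟩ with he'
        obtain ⟨e, hee⟩ : ∃ e, fe e = e' := by
          rcases hx : ψ.symm (Sum.inr (Sum.inl e')) with v | e | t
          · have : ψ (Sum.inl v) = Sum.inr (Sum.inl e') := by
              rw [← hx, Equiv.apply_symm_apply]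
            rw [hf] at this; exact absurd this (by simp)
          · refine ⟨e, ?_⟩
            have : ψ (Sum.inr (Sum.inl e)) = Sum.inr (Sum.inl e') := by
              rw [← hx, Equiv.apply_symm_apply]
            rw [hfe] at this
            simpa using this
          · have : ψ (Sum.inr (Sum.inr t)) = Sum.inr (Sum.inl e') := by
              rw [← hx, Equiv.apply_symm_apply]
            rw [hft] at this; exact absurd this (by simp)
        have h1' : ntAdj G₁ T₁ (Sum.inl a) (Sum.inr (Sum.inl e)) := by
          rw [h4, hf, hfe, hee]
          simp [ntAdj, he']
        have h2' : ntAdj G₁ T₁ (Sum.inl b) (Sum.inr (Sum.inl e)) := by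
          rw [h4, hf, hfe, hee]
          simp [ntAdj, he']
        simp only [ntAdj] at h1' h2'
        have hne : a ≠ b := fun h => hab.ne (by rw [h])
        have := (Sym2.mem_and_mem_iff hne).1 ⟨h1', h2'⟩
        have hmem2 := e.2
        rw [this] at hmem2
        exact hmem2
    refine ⟨⟨Equiv.ofBijective f ⟨hinj, fun w => hsurj w⟩, fun {a b} => (hadj a b).symm⟩, ?_⟩
    intro t
    constructor
    · intro ht
      have := (ft ⟨t, ht⟩).2
      rwa [htuple ⟨t, ht⟩] at this
    · intro ht
      -- surjectivity of the tuple part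
      obtain ⟨s, hss⟩ : ∃ s : {t // t ∈ T₁}, ft s = ⟨t.map f, ht⟩ := by
        rcases hx : ψ.symm (Sum.inr (Sum.inr ⟨t.map f, ht⟩)) with v | e | s
        · have : ψ (Sum.inl v) = Sum.inr (Sum.inr ⟨t.map f, ht⟩) := by
            rw [← hx, Equiv.apply_symm_apply]
          rw [hf] at this; exact absurd this (by simp)
        · have : ψ (Sum.inr (Sum.inl e)) = Sum.inr (Sum.inr ⟨t.map f, ht⟩) := by
            rw [← hx, Equiv.apply_symm_apply]
          rw [hfe] at this; exact absurd this (by simp)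
        · refine ⟨s, ?_⟩
          have : ψ (Sum.inr (Sum.inr s)) = Sum.inr (Sum.inr ⟨t.map f, ht⟩) := by
            rw [← hx, Equiv.apply_symm_apply]
          rw [hft] at this
          simpa using this
      have : s.1.map f = t.map f := by
        rw [← htuple s, hss]
      have : s.1 = t := List.map_injective_iff.2 hinj this
      rw [← this]
      exact s.2
end

section
/- Let (G₁, T₁) and (G₂, T₂) be graphs with node-tuple collections and let ψ be a type-preserving isomorphism from the lowering of (G₁, T₁) to the lowering of (G₂, T₂). Then the bijection φ : V₁ ≃ V₂ obtained by restricting ψ to node-vertices is an isomorphism of graphs with node-tuple collections: φ is a graph isomorphism from G₁ to G₂, and for every list t over V₁, t ∈ T₁ if and only if t.map φ ∈ T₂. -/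
/-- A type-preserving isomorphism of the lowerings of two
graphs with node-tuple collections restricts on node-vertices to an
isomorphism of graphs with node-tuple collections. -/
theorem nodeTuple_lowering_iso_lifts {V₁ V₂ : Type*}
    (G₁ : SimpleGraph V₁) (G₂ : SimpleGraph V₂)
    (T₁ : Set (List V₁)) (T₂ : Set (List V₂))
    (hT₁ : ∀ t ∈ T₁, 2 ≤ t.length) (hT₂ : ∀ t ∈ T₂, 2 ≤ t.length)
    (ψ : NTVert G₁ T₁ ≃ NTVert G₂ T₂)
    (hnode : ∀ v : V₁, ∃ w : V₂, ψ (Sum.inl v) = Sum.inl w)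
    (hedge : ∀ e : {e // e ∈ G₁.edgeSet}, ∃ e' : {e // e ∈ G₂.edgeSet},
      ψ (Sum.inr (Sum.inl e)) = Sum.inr (Sum.inl e'))
    (htuple : ∀ t : {t // t ∈ T₁}, ∃ t' : {t // t ∈ T₂},
      ψ (Sum.inr (Sum.inr t)) = Sum.inr (Sum.inr t'))
    (hadj : ∀ x y, ntAdj G₁ T₁ x y ↔ ntAdj G₂ T₂ (ψ x) (ψ y))
    (hmem : ∀ x y i, ntMem G₁ T₁ x y i ↔ ntMem G₂ T₂ (ψ x) (ψ y) i) :
    ∃ φ : G₁ ≃g G₂,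
      (∀ v : V₁, ψ (Sum.inl v) = Sum.inl (φ v)) ∧
      (∀ t : List V₁, t ∈ T₁ ↔ t.map ⇑φ ∈ T₂) := by
  classical
  choose f hf using hnode
  -- ψ.symm maps node-vertices to node-vertices
  have hnode' : ∀ w : V₂, ∃ v : V₁, ψ.symm (Sum.inl w) = Sum.inl v := by
    intro w
    rcases h : ψ.symm (Sum.inl w) with v | e | t
    · exact ⟨v, rfl⟩
    · obtain ⟨e', he'⟩ := hedge e
      have := (Equiv.apply_symm_apply ψ (Sum.inl w))
      rw [h, he'] at this
      exact absurd this (by simp)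
    · obtain ⟨t', ht'⟩ := htuple t
      have := (Equiv.apply_symm_apply ψ (Sum.inl w))
      rw [h, ht'] at this
      exact absurd this (by simp)
  choose g hg using hnode'
  -- ψ.symm maps edge-vertices to edge-vertices
  have hedge' : ∀ e' : {e // e ∈ G₂.edgeSet}, ∃ e : {e // e ∈ G₁.edgeSet},
      ψ.symm (Sum.inr (Sum.inl e')) = Sum.inr (Sum.inl e) := by
    intro e'
    rcases h : ψ.symm (Sum.inr (Sum.inl e')) with v | e | t
    · have := (Equiv.apply_symm_apply ψ (Sum.inr (Sum.inl e')))
      rw [h, hf v] at this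
      exact absurd this (by simp)
    · exact ⟨e, rfl⟩
    · obtain ⟨t', ht'⟩ := htuple t
      have := (Equiv.apply_symm_apply ψ (Sum.inr (Sum.inl e')))
      rw [h, ht'] at this
      exact absurd this (by simp)
  -- ψ.symm maps tuple-vertices to tuple-vertices
  have htuple' : ∀ t' : {t // t ∈ T₂}, ∃ t : {t // t ∈ T₁},
      ψ.symm (Sum.inr (Sum.inr t')) = Sum.inr (Sum.inr t) := by
    intro t'
    rcases h : ψ.symm (Sum.inr (Sum.inr t')) with v | e | t
    · have := (Equiv.apply_symm_apply ψ (Sum.inr (Sum.inr t')))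
      rw [h, hf v] at this
      exact absurd this (by simp)
    · obtain ⟨e', he'⟩ := hedge e
      have := (Equiv.apply_symm_apply ψ (Sum.inr (Sum.inr t')))
      rw [h, he'] at this
      exact absurd this (by simp)
    · exact ⟨t, rfl⟩
  have hgf : ∀ v, g (f v) = v := by
    intro v
    have h1 : ψ.symm (Sum.inl (f v)) = Sum.inl v := by
      rw [← hf v, Equiv.symm_apply_apply]
    have h2 := hg (f v)
    rw [h1] at h2
    exact (Sum.inl.inj h2).symm
  have hfg : ∀ w, f (g w) = w := by
    intro w
    have h1 : ψ (Sum.inl (g w)) = Sum.inl w := by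
      rw [← hg w, Equiv.apply_symm_apply]
    rw [hf (g w)] at h1
    exact Sum.inl.inj h1
  have hψg : ∀ w, ψ (Sum.inl (g w)) = Sum.inl w := by
    intro w; rw [← hg w, Equiv.apply_symm_apply]
  let φ0 : V₁ ≃ V₂ := ⟨f, g, hgf, hfg⟩
  have finj : Function.Injective f := φ0.injective
  -- forward adjacency
  have fwd : ∀ a b, G₁.Adj a b → G₂.Adj (f a) (f b) := by
    intro a b hab
    obtain ⟨e', he'⟩ := hedge ⟨s(a, b), hab⟩
    have ha : ntAdj G₂ T₂ (ψ (Sum.inl a)) (ψ (Sum.inr (Sum.inl ⟨s(a, b), hab⟩))) :=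
      (hadj _ _).mp (by simp [ntAdj])
    have hb : ntAdj G₂ T₂ (ψ (Sum.inl b)) (ψ (Sum.inr (Sum.inl ⟨s(a, b), hab⟩))) :=
      (hadj _ _).mp (by simp [ntAdj])
    rw [hf a, he'] at ha
    rw [hf b, he'] at hb
    have hne : f a ≠ f b := fun h => hab.ne (finj h)
    have he : e'.1 = s(f a, f b) := (Sym2.mem_and_mem_iff hne).mp ⟨ha, hb⟩
    have h2 : s(f a, f b) ∈ G₂.edgeSet := he ▸ e'.2
    rwa [SimpleGraph.mem_edgeSet] at h2
  -- backward adjacency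
  have bwd : ∀ a b, G₂.Adj (f a) (f b) → G₁.Adj a b := by
    intro a b hab
    obtain ⟨e0, he0⟩ := hedge' ⟨s(f a, f b), hab⟩
    have hψe : ψ (Sum.inr (Sum.inl e0)) = Sum.inr (Sum.inl ⟨s(f a, f b), hab⟩) := by
      rw [← he0, Equiv.apply_symm_apply]
    have ha : ntAdj G₁ T₁ (Sum.inl a) (Sum.inr (Sum.inl e0)) := by
      rw [hadj, hf a, hψe]; simp [ntAdj]
    have hb : ntAdj G₁ T₁ (Sum.inl b) (Sum.inr (Sum.inl e0)) := by
      rw [hadj, hf b, hψe]; simp [ntAdj]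
    have hne : a ≠ b := fun h => hab.ne (by rw [h])
    have he : e0.1 = s(a, b) := (Sym2.mem_and_mem_iff hne).mp ⟨ha, hb⟩
    have := e0.2
    rw [he, SimpleGraph.mem_edgeSet] at this
    exact this
  refine ⟨⟨φ0, fun {a b} => ⟨bwd a b, fwd a b⟩⟩, hf, ?_⟩
  intro t
  constructor
  · intro ht
    obtain ⟨t', ht'⟩ := htuple ⟨t, ht⟩
    have : t'.1 = t.map f := by
      apply List.ext_getElem?
      intro i
      rcases h : t[i]? with _ | v
      · rw [List.getElem?_map, h]
        rcases h2 : t'.1[i]? with _ | w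
        · rfl
        · exfalso
          have hm : ntMem G₂ T₂ (ψ (Sum.inl (g w))) (ψ (Sum.inr (Sum.inr ⟨t, ht⟩))) i := by
            rw [hψg, ht']; exact h2
          have := (hmem _ _ i).mpr hm
          simp only [ntMem] at this
          rw [h] at this; exact absurd this (by simp)
      · have hm : ntMem G₁ T₁ (Sum.inl v) (Sum.inr (Sum.inr ⟨t, ht⟩)) i := h
        have := (hmem _ _ i).mp hm
        rw [hf v, ht'] at this
        simp only [ntMem] at this
        rw [this, List.getElem?_map, h]
        rfl
    show List.map f t ∈ T₂
    exact this ▸ t'.2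
  · intro ht
    obtain ⟨t0, ht0⟩ := htuple' ⟨t.map f, ht⟩
    have hψt : ψ (Sum.inr (Sum.inr t0)) = Sum.inr (Sum.inr ⟨t.map f, ht⟩) := by
      rw [← ht0, Equiv.apply_symm_apply]
    have : t0.1 = t := by
      apply List.ext_getElem?
      intro i
      rcases h : t[i]? with _ | v
      · rcases h2 : t0.1[i]? with _ | w
        · rfl
        · exfalso
          have hm : ntMem G₁ T₁ (Sum.inl w) (Sum.inr (Sum.inr t0)) i := h2
          have := (hmem _ _ i).mp hm
          rw [hf w, hψt] at this
          simp only [ntMem, List.getElem?_map] at this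
          rw [h] at this
          exact absurd this (by simp)
      · have hm : ntMem G₂ T₂ (ψ (Sum.inl v)) (ψ (Sum.inr (Sum.inr t0))) i := by
          rw [hf v, hψt]
          simp only [ntMem, List.getElem?_map]
          rw [h]; rfl
        exact (hmem _ _ i).mpr hm
    exact this ▸ t0.2
end
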